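/- Let X and Y be smooth normed spaces over 𝔽 with unique compatible semi-inner products, and let f : X → Y be surjective with |[f(x), f(y)]| = |[x, y]| for all x, y. Then f maps one-dimensional subspaces to one-dimensional subspaces: the map ⟨x⟩ ↦ ⟨f(x)⟩ is a well-defined surjection from the projective space of X to the projective space of Y. -/

import Mathlib

open RCLike

/-- A support functional at `x`: a norm-one continuous linear functional with `φ x = ‖x‖`. -/
def SuppFunc (𝕜 : Type*) [RCLike 𝕜] {X : Type*} [NormedAddCommGroup X] [NormedSpace 𝕜 X]
    (x : X) (φ : X →L[𝕜] 𝕜) : Prop :=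
  ‖φ‖ = 1 ∧ φ x = (‖x‖ : 𝕜)

/-- `X` is smooth at `x` if there is a unique support functional at `x`. -/
def NormSmoothAt (𝕜 : Type*) [RCLike 𝕜] {X : Type*} [NormedAddCommGroup X] [NormedSpace 𝕜 X]
    (x : X) : Prop := ∃! φ : X →L[𝕜] 𝕜, SuppFunc 𝕜 x φ

/-- `X` is smooth if it is smooth at every nonzero point. -/
def NormSmooth (𝕜 : Type*) (X : Type*) [RCLike 𝕜] [NormedAddCommGroup X] [NormedSpace 𝕜 X] :
    Prop := ∀ x : X, x ≠ 0 → NormSmoothAt 𝕜 x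

/-- `sip` is the canonical semi-inner product `[u,v] = ‖v‖ * φ_v u` built from support
functionals (on a smooth space this pins `sip` down uniquely). -/
def IsCompatSIP (𝕜 : Type*) {X : Type*} [RCLike 𝕜] [NormedAddCommGroup X] [NormedSpace 𝕜 X]
    (sip : X → X → 𝕜) : Prop :=
  (∀ u : X, sip u 0 = 0) ∧
  ∀ (u v : X) (φ : X →L[𝕜] 𝕜), SuppFunc 𝕜 v φ → sip u v = (‖v‖ : 𝕜) * φ u

/-- Birkhoff–James orthogonality: `x ⊥ y` iff `‖x + a • y‖ ≥ ‖x‖` for all scalars. -/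
def BJOrth (𝕜 : Type*) {X : Type*} [RCLike 𝕜] [NormedAddCommGroup X] [NormedSpace 𝕜 X]
    (x y : X) : Prop := ∀ a : 𝕜, ‖x‖ ≤ ‖x + a • y‖

/-- A semi-inner product compatible with the norm: additive and homogeneous in the first
variable, conjugate-homogeneous in the second, positive definite, Cauchy–Schwarz, and
`[x,x] = ‖x‖²`. -/
def IsSIP (𝕜 : Type*) {X : Type*} [RCLike 𝕜] [NormedAddCommGroup X] [NormedSpace 𝕜 X]
    (sip : X → X → 𝕜) : Prop :=
  (∀ x y z : X, sip (x + y) z = sip x z + sip y z) ∧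
  (∀ (a : 𝕜) (x y : X), sip (a • x) y = a * sip x y) ∧
  (∀ (a : 𝕜) (x y : X), sip x (a • y) = (starRingEnd 𝕜) a * sip x y) ∧
  (∀ x : X, x ≠ 0 → 0 < re (sip x x) ∧ im (sip x x) = 0) ∧
  (∀ x y : X, ‖sip x y‖ ≤ Real.sqrt (re (sip x x)) * Real.sqrt (re (sip y y))) ∧
  (∀ x : X, sip x x = (‖x‖ : 𝕜) ^ 2)


/-- Norm attainment for a functional on a finite-dimensional space. -/
lemma exists_norm_attain {𝕜 : Type*} [RCLike 𝕜] {Z : Type*} [NormedAddCommGroup Z]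
    [NormedSpace 𝕜 Z] [FiniteDimensional 𝕜 Z] (g : Z →L[𝕜] 𝕜) (hg : g ≠ 0) :
    ∃ z : Z, ‖z‖ = 1 ∧ ‖g z‖ = ‖g‖ := by
  haveI : ProperSpace Z := FiniteDimensional.proper 𝕜 Z
  obtain ⟨z', hz'⟩ : ∃ z' : Z, g z' ≠ 0 := by
    by_contra h
    push_neg at h
    exact hg (ContinuousLinearMap.ext fun z => by simp [h z])
  have hz'0 : z' ≠ 0 := fun h => hz' (by simp [h])
  have hz'n : ‖z'‖ ≠ 0 := norm_ne_zero_iff.mpr hz'0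
  set z₁ : Z := (‖z'‖⁻¹ : 𝕜) • z' with hz₁def
  have hz₁ : ‖z₁‖ = 1 := by
    rw [hz₁def, norm_smul, norm_inv, RCLike.norm_ofReal, abs_of_nonneg (norm_nonneg z')]
    field_simp
  have hsph : IsCompact (Metric.sphere (0 : Z) 1) := isCompact_sphere 0 1
  have hne : (Metric.sphere (0 : Z) 1).Nonempty := ⟨z₁, by simp [hz₁]⟩
  obtain ⟨z₀, hz₀mem, hz₀max⟩ := hsph.exists_isMaxOn hne
    ((continuous_norm.comp g.continuous).continuousOn)
  have hz₀ : ‖z₀‖ = 1 := by simpa using hz₀mem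
  refine ⟨z₀, hz₀, ?_⟩
  apply le_antisymm
  · calc ‖g z₀‖ ≤ ‖g‖ * ‖z₀‖ := g.le_opNorm z₀
      _ = ‖g‖ := by rw [hz₀, mul_one]
  · apply ContinuousLinearMap.opNorm_le_bound _ (norm_nonneg _)
    intro x
    by_cases hx : x = 0
    · simp [hx]
    · have hxn : ‖x‖ ≠ 0 := norm_ne_zero_iff.mpr hx
      have hmem : (‖x‖⁻¹ : 𝕜) • x ∈ Metric.sphere (0 : Z) 1 := by
        simp [norm_smul, RCLike.norm_ofReal, abs_of_nonneg (norm_nonneg x),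
          inv_mul_cancel₀ hxn]
      have := hz₀max hmem
      have hthis : ‖g ((‖x‖⁻¹ : 𝕜) • x)‖ ≤ ‖g z₀‖ := this
      have hgx : ‖g ((‖x‖⁻¹ : 𝕜) • x)‖ = ‖x‖⁻¹ * ‖g x‖ := by
        rw [map_smul, norm_smul, norm_inv, RCLike.norm_ofReal, abs_of_nonneg (norm_nonneg x)]
      rw [hgx] at hthis
      calc ‖g x‖ = ‖x‖ * (‖x‖⁻¹ * ‖g x‖) := by field_simp
        _ ≤ ‖x‖ * ‖g z₀‖ := by
            apply mul_le_mul_of_nonneg_left hthis (norm_nonneg x)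
        _ = ‖g z₀‖ * ‖x‖ := mul_comm _ _

lemma sip_self_norm {𝕜 : Type*} [RCLike 𝕜] {X : Type*} [NormedAddCommGroup X]
    [NormedSpace 𝕜 X] {sip : X → X → 𝕜} (h : IsCompatSIP 𝕜 sip)
    (z : X) : ‖sip z z‖ = ‖z‖ ^ 2 := by
  by_cases hz : z = 0
  · rw [hz, h.1]; simp
  · obtain ⟨φ, hφ1, hφ2⟩ := exists_dual_vector 𝕜 z (norm_ne_zero_iff.mpr hz)
    rw [h.2 z z φ ⟨hφ1, hφ2⟩, hφ2]
    rw [norm_mul, RCLike.norm_ofReal, abs_of_nonneg (norm_nonneg z), sq]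

theorem stmt10 {𝕜 : Type*} [RCLike 𝕜] {X Y : Type*} [NormedAddCommGroup X] [NormedSpace 𝕜 X]
    [NormedAddCommGroup Y] [NormedSpace 𝕜 Y]
    (hsmX : NormSmooth 𝕜 X) (hsmY : NormSmooth 𝕜 Y)
    (sipX : X → X → 𝕜) (hX : IsCompatSIP 𝕜 sipX)
    (sipY : Y → Y → 𝕜) (hY : IsCompatSIP 𝕜 sipY)
    (f : X → Y) (hsurj : Function.Surjective f)
    (hf : ∀ x y : X, ‖sipY (f x) (f y)‖ = ‖sipX x y‖) :
    (∀ x : X, x ≠ 0 → f x ≠ 0) ∧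
    (∀ x : X, x ≠ 0 → ∀ c : 𝕜, c ≠ 0 → ∃ γ : 𝕜, γ ≠ 0 ∧ f (c • x) = γ • f x) ∧
    (∀ w : Y, w ≠ 0 → ∃ x : X, x ≠ 0 ∧ ∃ γ : 𝕜, γ ≠ 0 ∧ f x = γ • w) := by
  have hfn : ∀ x : X, ‖f x‖ = ‖x‖ := by
    intro x
    have h1 : ‖f x‖ ^ 2 = ‖x‖ ^ 2 := by
      rw [← sip_self_norm hY (f x), hf, sip_self_norm hX]
    nlinarith [norm_nonneg (f x), norm_nonneg x]
  have hne : ∀ x : X, x ≠ 0 → f x ≠ 0 := by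
    intro x hx h
    apply hx
    rw [← norm_eq_zero, ← hfn x, h, norm_zero]
  refine ⟨hne, ?_, ?_⟩
  · intro x hx c hc
    set u := f (c • x) with hu_def
    set v := f x with hv_def
    have hcx : c • x ≠ 0 := smul_ne_zero hc hx
    have hu : u ≠ 0 := hne _ hcx
    have hv : v ≠ 0 := hne _ hx
    -- key estimate
    have key : ∀ (w : Y) (φ : Y →L[𝕜] 𝕜), w ≠ 0 → (‖φ‖ = 1 ∧ φ w = (‖w‖ : 𝕜)) →
        ‖φ u‖ = ‖c‖ * ‖φ v‖ := by
      intro w φ hw hφ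
      obtain ⟨z, rfl⟩ := hsurj w
      have hz : z ≠ 0 := by
        intro h
        apply hw
        rw [← norm_eq_zero, hfn, h, norm_zero]
      obtain ⟨ψ, hψ1, hψ2⟩ := exists_dual_vector 𝕜 z (norm_ne_zero_iff.mpr hz)
      have e1 : sipY u (f z) = (‖f z‖ : 𝕜) * φ u := hY.2 _ _ φ hφ
      have e2 : sipY v (f z) = (‖f z‖ : 𝕜) * φ v := hY.2 _ _ φ hφ
      have e3 : sipX (c • x) z = c * sipX x z := by
        rw [hX.2 _ _ ψ ⟨hψ1, hψ2⟩, hX.2 x z ψ ⟨hψ1, hψ2⟩, map_smul, smul_eq_mul]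
        ring
      have h6 : ‖f z‖ * ‖φ u‖ = ‖c‖ * (‖f z‖ * ‖φ v‖) := by
        have hA := hf (c • x) z
        have hB := hf x z
        rw [← hu_def, e1, e3] at hA
        rw [← hv_def, e2] at hB
        rw [norm_mul, RCLike.norm_ofReal, abs_of_nonneg (norm_nonneg _)] at hA hB
        rw [hA, hB, norm_mul]
      have hfzn : ‖f z‖ ≠ 0 := norm_ne_zero_iff.mpr hw
      exact mul_left_cancel₀ hfzn (h6.trans (by ring))
    -- linear dependence
    have hdep : ∃ l : 𝕜, c • v = l • u := by
      by_contra hcon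
      push_neg at hcon
      set w2 : Fin 2 → Y := ![c • v, u] with hw2
      have hli : LinearIndependent 𝕜 w2 := by
        rw [linearIndependent_fin2]
        refine ⟨by simpa [hw2] using hu, fun a => ?_⟩
        simp only [hw2, Matrix.cons_val_one, Matrix.head_cons, Matrix.cons_val_zero]
        exact fun h => hcon a h.symm
      set Z := Submodule.span 𝕜 (Set.range w2) with hZ
      haveI : FiniteDimensional 𝕜 Z := FiniteDimensional.span_of_finite 𝕜 (Set.finite_range w2)
      let b : Module.Basis (Fin 2) 𝕜 Z := Module.Basis.span hli
      let g : Z →L[𝕜] 𝕜 := LinearMap.toContinuousLinearMap (b.coord 0)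
      have hgb0 : g (b 0) = 1 := by simp [g]
      have hgb1 : g (b 1) = 0 := by simp [g]
      have hg0 : g ≠ 0 := by
        intro h
        rw [h] at hgb0
        simp at hgb0
      obtain ⟨z₀, hz₀n, hz₀max⟩ := exists_norm_attain g hg0
      have hgn : ‖g‖ ≠ 0 := fun h => hg0 (norm_eq_zero.mp h)
      have hgz₀ : g z₀ ≠ 0 := by
        intro h
        apply hgn
        rw [← hz₀max, h, norm_zero]
      set a := g z₀ with ha
      have han : ‖a‖ ≠ 0 := norm_ne_zero_iff.mpr hgz₀
      set z₁ : Z := ((starRingEnd 𝕜 a) / (‖a‖ : 𝕜)) • z₀ with hz₁def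
      have hz₁n : ‖z₁‖ = 1 := by
        rw [hz₁def, norm_smul, norm_div, RCLike.norm_conj, RCLike.norm_ofReal,
          abs_of_nonneg (norm_nonneg a), div_self han, one_mul, hz₀n]
      have hak : (‖a‖ : 𝕜) ≠ 0 := RCLike.ofReal_ne_zero.mpr han
      have hgz₁ : g z₁ = (‖a‖ : 𝕜) := by
        rw [hz₁def, map_smul, smul_eq_mul, ← ha]
        rw [div_mul_eq_mul_div, RCLike.conj_mul]
        rw [sq, mul_div_assoc, div_self hak, mul_one]
      set h1 : Z →L[𝕜] 𝕜 := (‖g‖⁻¹ : 𝕜) • g with hh1def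
      have hh1z₁ : h1 z₁ = 1 := by
        rw [hh1def]
        simp only [ContinuousLinearMap.smul_apply, smul_eq_mul]
        rw [hgz₁, ← hz₀max, ha]
        rw [← RCLike.ofReal_inv, ← RCLike.ofReal_mul]
        rw [inv_mul_cancel₀ han]
        simp
      have hh1norm : ‖h1‖ = 1 := by
        apply le_antisymm
        · calc ‖h1‖ ≤ ‖(‖g‖⁻¹ : 𝕜)‖ * ‖g‖ := by
                rw [hh1def]
                exact ContinuousLinearMap.opNorm_smul_le _ _
            _ = 1 := by
                rw [norm_inv, RCLike.norm_ofReal, abs_of_nonneg (norm_nonneg g)]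
                field_simp
        · calc (1 : ℝ) = ‖h1 z₁‖ := by rw [hh1z₁]; simp
            _ ≤ ‖h1‖ * ‖z₁‖ := h1.le_opNorm z₁
            _ = ‖h1‖ := by rw [hz₁n, mul_one]
      obtain ⟨Ψ, hΨext, hΨnorm⟩ := exists_extension_norm_eq (Z : Subspace 𝕜 Y) h1
      have hz₁Y : ‖(z₁ : Y)‖ = 1 := by rwa [Submodule.norm_coe]
      have hz₁ne : (z₁ : Y) ≠ 0 := by
        intro h
        rw [h, norm_zero] at hz₁Y
        exact zero_ne_one hz₁Y
      have hsupp : ‖Ψ‖ = 1 ∧ Ψ (z₁ : Y) = (‖(z₁ : Y)‖ : 𝕜) := by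
        refine ⟨hΨnorm.trans hh1norm, ?_⟩
        rw [hΨext z₁, hh1z₁, hz₁Y]
        simp
      have hkey := key (z₁ : Y) Ψ hz₁ne hsupp
      -- compute Ψ u and Ψ (c • v)
      have hmem_u : u ∈ Z := Submodule.subset_span ⟨1, by simp [hw2]⟩
      have hmem_cv : c • v ∈ Z := Submodule.subset_span ⟨0, by simp [hw2]⟩
      have hb0 : b 0 = ⟨c • v, hmem_cv⟩ := by
        apply Subtype.ext
        exact (congrArg Subtype.val (Module.Basis.span_apply hli 0)).trans (by simp [hw2] : w2 0 = c • v)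
      have hb1 : b 1 = ⟨u, hmem_u⟩ := by
        apply Subtype.ext
        exact (congrArg Subtype.val (Module.Basis.span_apply hli 1)).trans (by simp [hw2] : w2 1 = u)
      have hΨu : Ψ u = 0 := by
        have := hΨext ⟨u, hmem_u⟩
        rw [this, hh1def]
        simp only [ContinuousLinearMap.smul_apply, smul_eq_mul]
        rw [← hb1, hgb1, mul_zero]
      have hΨcv : Ψ (c • v) = (‖g‖⁻¹ : 𝕜) := by
        have := hΨext ⟨c • v, hmem_cv⟩
        rw [this, hh1def]
        simp only [ContinuousLinearMap.smul_apply, smul_eq_mul]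
        rw [← hb0, hgb0, mul_one]
      have hΨcv' : Ψ (c • v) = c * Ψ v := by rw [map_smul, smul_eq_mul]
      rw [hΨu, norm_zero] at hkey
      have : ‖Ψ (c • v)‖ = 0 := by
        rw [hΨcv', norm_mul, ← hkey]
      rw [hΨcv] at this
      simp only [norm_inv, RCLike.norm_ofReal, abs_of_nonneg (norm_nonneg g), inv_eq_zero] at this
      exact hgn this
    obtain ⟨l, hl⟩ := hdep
    have hcv : c • v ≠ 0 := smul_ne_zero hc hv
    have hlne : l ≠ 0 := by
      intro h
      rw [h, zero_smul] at hl
      exact hcv hl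
    refine ⟨l⁻¹ * c, mul_ne_zero (inv_ne_zero hlne) hc, ?_⟩
    show u = (l⁻¹ * c) • v
    rw [mul_smul, hl, smul_smul, inv_mul_cancel₀ hlne, one_smul]
  · intro w hw
    obtain ⟨x, rfl⟩ := hsurj w
    have hx : x ≠ 0 := by
      intro h
      apply hw
      rw [← norm_eq_zero, hfn, h, norm_zero]
    exact ⟨x, hx, 1, one_ne_zero, (one_smul 𝕜 (f x)).symm⟩
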